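/- Let d ≥ 1 and let (k_M) be positive naturals with k_M → ∞. Let R_M = ⌈(M/k_M)^{1/d}⌉^d and suppose R_M ≤ M and R_M·k_M ≤ M for all large M. Then (1/M)·ln( C(M+R_M, M)^d ) → 0 as M → ∞. -/

import Mathlib

open Filter


lemma log_factorial_lb (R : ℕ) : (R : ℝ) * Real.log R - R ≤ Real.log (R.factorial) := by
  have h := Real.pow_div_factorial_le_exp (x := (R : ℝ)) (Nat.cast_nonneg R) R
  have hfac : (0 : ℝ) < R.factorial := by exact_mod_cast R.factorial_pos
  rcases Nat.eq_zero_or_pos R with hR | hR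
  · simp [hR]
  have hRpos : (0 : ℝ) < R := by exact_mod_cast hR
  have h2 : (R : ℝ) ^ R ≤ R.factorial * Real.exp R := by
    rw [div_le_iff₀ hfac] at h; linarith [h]
  have := Real.log_le_log (by positivity) h2
  rw [Real.log_pow, Real.log_mul (ne_of_gt hfac) (Real.exp_ne_zero _), Real.log_exp] at this
  linarith

lemma key_bound (d M R : ℕ) (hM : 1 ≤ M) (hR1 : 1 ≤ R) (hRM : R ≤ M) :
    (1 / (M : ℝ)) * Real.log ((Nat.choose (M + R) M : ℝ) ^ d) ≤
      (d : ℝ) * (((R : ℝ) / M) * (1 + Real.log 2) - ((R : ℝ) / M) * Real.log ((R : ℝ) / M)) := by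
  have hMpos : (0 : ℝ) < M := by exact_mod_cast hM
  have hRpos : (0 : ℝ) < R := by exact_mod_cast hR1
  have hfac : (0 : ℝ) < R.factorial := by exact_mod_cast R.factorial_pos
  have hCpos : (0 : ℝ) < (Nat.choose (M + R) M : ℝ) := by
    exact_mod_cast Nat.choose_pos (Nat.le_add_right M R)
  have hC : (Nat.choose (M + R) M : ℝ) ≤ ((M + R : ℕ) : ℝ) ^ R / R.factorial := by
    rw [Nat.choose_symm_add]
    exact Nat.choose_le_pow_div R (M + R)
  have hlogC : Real.log (Nat.choose (M + R) M : ℝ) ≤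
      (R : ℝ) * Real.log ((M : ℝ) + R) - Real.log (R.factorial) := by
    have := Real.log_le_log hCpos hC
    rw [Real.log_div (by positivity) (ne_of_gt hfac), Real.log_pow] at this
    push_cast at this ⊢
    linarith
  have hfl := log_factorial_lb R
  have hlog2 : Real.log ((M : ℝ) + R) ≤ Real.log 2 + Real.log M := by
    rw [← Real.log_mul (by norm_num) (ne_of_gt hMpos)]
    apply Real.log_le_log (by positivity)
    have : (R : ℝ) ≤ M := by exact_mod_cast hRM
    linarith
  have hmain : Real.log (Nat.choose (M + R) M : ℝ) ≤
      (R : ℝ) * (Real.log 2 + Real.log M - Real.log R + 1) := by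
    nlinarith [hRpos.le]
  rw [Real.log_pow]
  have hxlog : Real.log ((R : ℝ) / M) = Real.log R - Real.log M :=
    Real.log_div (ne_of_gt hRpos) (ne_of_gt hMpos)
  rw [hxlog]
  have h1M : (0 : ℝ) ≤ 1 / M := by positivity
  calc (1 / (M : ℝ)) * ((d : ℝ) * Real.log (Nat.choose (M + R) M : ℝ))
      ≤ (1 / (M : ℝ)) * ((d : ℝ) * ((R : ℝ) * (Real.log 2 + Real.log M - Real.log R + 1))) := by
        apply mul_le_mul_of_nonneg_left _ h1M
        exact mul_le_mul_of_nonneg_left hmain (Nat.cast_nonneg d)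
    _ = (d : ℝ) * (((R : ℝ) / M) * (1 + Real.log 2) - ((R : ℝ) / M) * (Real.log R - Real.log M)) := by
        field_simp
        ring

theorem gessaman_condition_b (d : ℕ) (hd : 1 ≤ d) (k : ℕ → ℕ)
    (hkpos : ∀ M, 0 < k M)
    (hk : Tendsto (fun M => (k M : ℝ)) atTop atTop)
    (R : ℕ → ℕ)
    (hR : ∀ M, R M = (⌈((M : ℝ) / (k M)) ^ ((1 : ℝ) / d)⌉₊) ^ d)
    (hRM : ∀ᶠ M in atTop, R M ≤ M ∧ R M * k M ≤ M) :
    Tendsto (fun M : ℕ =>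
        (1 / (M : ℝ)) * Real.log ((Nat.choose (M + R M) M : ℝ) ^ d))
      atTop (nhds 0) := by
  -- x M = R M / M tends to 0
  set x : ℕ → ℝ := fun M => (R M : ℝ) / M with hx
  have hx0 : Tendsto x atTop (nhds 0) := by
    apply tendsto_of_tendsto_of_tendsto_of_le_of_le'
      (tendsto_const_nhds : Tendsto (fun _ : ℕ => (0:ℝ)) atTop (nhds 0))
      (hk.inv_tendsto_atTop)
    · exact Eventually.of_forall fun M => by positivity
    · filter_upwards [hRM, eventually_ge_atTop 1] with M hM hM1
      have hMpos : (0:ℝ) < M := by exact_mod_cast hM1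
      have hkp : (0:ℝ) < k M := by exact_mod_cast hkpos M
      show (R M : ℝ) / M ≤ (fun M => (k M : ℝ))⁻¹ M
      simp only [Pi.inv_apply]
      rw [div_le_iff₀ hMpos, inv_mul_eq_div, le_div_iff₀ hkp]
      exact_mod_cast hM.2
  -- g continuous, g 0 = 0
  have hg : Tendsto (fun M => (d : ℝ) * (x M * (1 + Real.log 2) - x M * Real.log (x M)))
      atTop (nhds 0) := by
    have hcont : Continuous fun y : ℝ => (d : ℝ) * (y * (1 + Real.log 2) - y * Real.log y) :=
      continuous_const.mul ((continuous_id.mul continuous_const).sub Real.continuous_mul_log)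
    have := (hcont.tendsto 0).comp hx0
    simpa [Function.comp_def] using this
  apply tendsto_of_tendsto_of_tendsto_of_le_of_le'
    (tendsto_const_nhds : Tendsto (fun _ : ℕ => (0:ℝ)) atTop (nhds 0)) hg
  · -- lower bound 0
    apply Eventually.of_forall
    intro M
    have hC : (1:ℝ) ≤ (Nat.choose (M + R M) M : ℝ) ^ d := by
      have : 1 ≤ (Nat.choose (M + R M) M : ℝ) := by
        exact_mod_cast Nat.choose_pos (Nat.le_add_right M (R M))
      exact one_le_pow₀ this
    have := Real.log_nonneg hC
    positivity
  · -- upper bound via key_bound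
    filter_upwards [hRM, eventually_ge_atTop 1] with M hM hM1
    have hR1 : 1 ≤ R M := by
      rw [hR M]
      apply Nat.one_le_pow
      rw [Nat.ceil_pos]
      apply Real.rpow_pos_of_pos
      have hMpos : (0:ℝ) < M := by exact_mod_cast hM1
      have hkp : (0:ℝ) < k M := by exact_mod_cast hkpos M
      positivity
    exact key_bound d M (R M) hM1 hR1 hM.1
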